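/- In every model of Md + CC + SSAV (a complex meadow), with the derived operations re(x) = (1/2)·(x + conj(x)) and im(x) = −(i/2)·(x − conj(x)), the following identities hold for all x: (RI0) x = re(x) + im(x)·i; (RI1) re(x) = conj(re(x)); (RI2) im(x) = conj(im(x)); (RI13) re(x⁻¹) = re(x)·(re(x)·re(x) + im(x)·im(x))⁻¹; (RI21) im(x⁻¹) = −im(x)·(re(x)·re(x) + im(x)·im(x))⁻¹. -/
import Mathlib


/-- A meadow: a commutative ring with a total inverse operation satisfying
`(x⁻¹)⁻¹ = x` and the restricted inverse law `x * (x * x⁻¹) = x`. -/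
class Meadow (M : Type) extends CommRing M, Inv M where
  minv_inv : ∀ x : M, x⁻¹⁻¹ = x
  ril : ∀ x : M, x * (x * x⁻¹) = x

/-- The Inverse Law `IL`: a cancellation meadow is a meadow satisfying it. -/
def InverseLaw (M : Type) [Meadow M] : Prop :=
  ∀ x : M, x ≠ 0 → x * x⁻¹ = 1

/-- A complex meadow (model of `Md + CC + SSAV`): a meadow with an imaginary unit
`i` and a conjugation `conj` satisfying the axioms `CC` and the scheme `SSAV`,
where `1_x = x·x⁻¹`. -/
structure IsComplexMeadow (M : Type) [Meadow M] (i : M) (conj : M → M) : Prop where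
  cc0 : conj 0 = 0
  cc1 : conj 1 = 1
  cc2 : conj i = -i
  cc3 : ∀ x : M, conj (-x) = -conj x
  cc4 : ∀ x y : M, conj (x + y) = conj x + conj y
  cc5 : ∀ x y : M, conj (x * y) = conj x * conj y
  cc6 : ∀ x : M, conj x⁻¹ = (conj x)⁻¹
  cc7 : ∀ x : M, conj (conj x) = x
  cc8 : i * i = -1
  cc9 : ∀ x : M, conj x * (conj x)⁻¹ = x * x⁻¹
  ssav : ∀ (n : ℕ) (x : Fin (n + 1) → M),
    (1 + ∑ j, x j * conj (x j)) * (1 + ∑ j, x j * conj (x j))⁻¹ = 1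

/-- The real part `re(x) = (1/2)·(x + conj x)` in a complex meadow. -/
def cmRe {M : Type} [Meadow M] (conj : M → M) (x : M) : M :=
  (1 * (2 : M)⁻¹) * (x + conj x)

/-- The imaginary part `im(x) = −(i/2)·(x − conj x)` in a complex meadow. -/
def cmIm {M : Type} [Meadow M] (i : M) (conj : M → M) (x : M) : M :=
  -(i * (2 : M)⁻¹) * (x - conj x)

section MeadowAux

variable {M : Type} [Meadow M]

lemma meadow_inv_ril (x : M) : x⁻¹ * x * x⁻¹ = x⁻¹ := by
  have h := Meadow.ril x⁻¹
  rw [Meadow.minv_inv] at h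
  linear_combination h

lemma meadow_pseudoinv_unique (a z w : M) (hz1 : a * z * a = a) (hz2 : z * a * z = z)
    (hw1 : a * w * a = a) (hw2 : w * a * w = w) : z = w := by
  have h1 : (a * z) * (a * w) = a * w := by linear_combination w * hz1
  have h2 : (a * w) * (a * z) = a * z := by linear_combination z * hw1
  have he : a * z = a * w := by linear_combination h1 - h2
  have hz : z = a * w * z := by linear_combination z * he - hz2
  have hw : w = a * z * w := by linear_combination (-w) * he - hw2
  linear_combination hz - hw

lemma meadow_minv_mul (x y : M) : (x * y)⁻¹ = x⁻¹ * y⁻¹ := by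
  apply meadow_pseudoinv_unique (x * y)
  · linear_combination Meadow.ril (x * y)
  · linear_combination meadow_inv_ril (x * y)
  · linear_combination (x * x * x⁻¹) * Meadow.ril y + y * Meadow.ril x
  · linear_combination (x⁻¹ * x * x⁻¹) * meadow_inv_ril y + y⁻¹ * meadow_inv_ril x

end MeadowAux

/-- in every complex meadow the identities RI0, RI1, RI2, RI13 and
RI21 hold. -/
theorem complexMeadow_re_im_identities (M : Type) [Meadow M] (i : M)
    (conj : M → M) (h : IsComplexMeadow M i conj) (x : M) :
    x = cmRe conj x + cmIm i conj x * i ∧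
    cmRe conj x = conj (cmRe conj x) ∧
    cmIm i conj x = conj (cmIm i conj x) ∧
    cmRe conj x⁻¹ =
      cmRe conj x * (cmRe conj x * cmRe conj x + cmIm i conj x * cmIm i conj x)⁻¹ ∧
    cmIm i conj x⁻¹ =
      -cmIm i conj x * (cmRe conj x * cmRe conj x + cmIm i conj x * cmIm i conj x)⁻¹ := by
  obtain ⟨cc0, cc1, cc2, cc3, cc4, cc5, cc6, cc7, cc8, cc9, ssav⟩ := h
  have h2 : (2 : M) * (2 : M)⁻¹ = 1 := by
    have hs := ssav 0 (fun _ => (1 : M))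
    simpa [cc1, one_add_one_eq_two] using hs
  have hc2 : conj (2 : M) = 2 := by
    have h12 : (2 : M) = 1 + 1 := by norm_num
    rw [h12, cc4, cc1]
  have hct : conj ((2 : M)⁻¹) = (2 : M)⁻¹ := by rw [cc6, hc2]
  set a := cmRe conj x with ha
  set b := cmIm i conj x with hb
  have haa : a = 1 * (2 : M)⁻¹ * (x + conj x) := by rw [ha]; rfl
  have hbb : b = -(i * (2 : M)⁻¹) * (x - conj x) := by rw [hb]; rfl
  have hca : conj a = a := by
    rw [haa, cc5, cc5, cc4, cc1, cc7, hct]; ring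
  have hcb : conj b = b := by
    rw [hbb, sub_eq_add_neg, cc5, cc3, cc5, cc2, hct, cc4, cc3, cc7]; ring
  have hx : x = a + b * i := by
    linear_combination -haa - i * hbb + ((2 : M)⁻¹ * (x - conj x)) * cc8 - x * h2
  have hcx : conj x = a - b * i := by
    have hc := congrArg conj hx
    rw [cc4, cc5, hca, hcb, cc2] at hc
    linear_combination hc
  have hs : x * conj x = a * a + b * b := by
    linear_combination conj x * hx + (a + b * i) * hcx - b * b * cc8
  have key : ∀ y : M, y⁻¹ = conj y * (y * conj y)⁻¹ := by
    intro y
    rw [meadow_minv_mul]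
    linear_combination (-(y⁻¹)) * cc9 y - meadow_inv_ril y
  have hinv : x⁻¹ = conj x * (a * a + b * b)⁻¹ := by rw [key x, hs]
  have hcinv : conj x⁻¹ = x * (a * a + b * b)⁻¹ := by
    rw [cc6, key (conj x), cc7, mul_comm (conj x) x, hs]
  refine ⟨hx, hca.symm, hcb.symm, ?_, ?_⟩
  · show 1 * (2 : M)⁻¹ * (x⁻¹ + conj x⁻¹) = a * (a * a + b * b)⁻¹
    rw [hcinv, hinv]
    linear_combination (-(a * a + b * b)⁻¹) * haa
  · show -(i * (2 : M)⁻¹) * (x⁻¹ - conj x⁻¹) = -b * (a * a + b * b)⁻¹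
    rw [hcinv, hinv]
    linear_combination ((a * a + b * b)⁻¹) * hbb
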